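/- Let D be the distance matrix of the complete m-partite graph K_{n₁,...,n_m} on N = Σ nᵢ vertices. Then the sum of all cofactors of D equals (-2)^{N-m} · Σ_{i=1}^m ( nᵢ · Π_{j≠i} (nⱼ - 2) ). -/

import Mathlib

open Finset Matrix Polynomial

section DetLemma

variable {ι : Type*} [Fintype ι] [DecidableEq ι]

private lemma det_aux0 (A : Matrix ι ι ℝ) (v : ι → ℝ) (k : ι) (hA : A k = v) (u : ι → ℝ)
    (s : Finset ι) (hk : k ∉ s) :
    (Matrix.of fun p q => A p q + if p ∈ s then u p * v q else 0).det = A.det := by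
  revert hk
  induction s using Finset.induction_on with
  | empty => intro _; simp; rfl
  | @insert a s' ha ih =>
    intro hk
    have hka : k ≠ a := fun h => hk (h ▸ Finset.mem_insert_self a s')
    have hks' : k ∉ s' := fun h => hk (Finset.mem_insert_of_mem h)
    have hM : (Matrix.of fun p q => A p q + if p ∈ insert a s' then u p * v q else 0)
        = (Matrix.of fun p q => A p q + if p ∈ s' then u p * v q else 0).updateRow a
            ((fun q => A a q) + u a • v) := by
      ext p q
      by_cases hpa : p = a
      · subst hpa
        simp [Matrix.updateRow_self, ha]
      · simp [Matrix.updateRow_ne hpa, Finset.mem_insert, hpa]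
    have h1 : (Matrix.of fun p q => A p q + if p ∈ s' then u p * v q else 0).updateRow a
        (fun q => A a q)
        = (Matrix.of fun p q => A p q + if p ∈ s' then u p * v q else 0) := by
      ext p q
      by_cases hpa : p = a
      · subst hpa; simp [Matrix.updateRow_self, ha]
      · simp [Matrix.updateRow_ne hpa]
    have h2 : ((Matrix.of fun p q => A p q + if p ∈ s' then u p * v q else 0).updateRow
        a v).det = 0 := by
      apply Matrix.det_zero_of_row_eq hka
      funext q
      rw [Matrix.updateRow_ne hka, Matrix.updateRow_self]
      simp [hks', ← hA]
    rw [hM, Matrix.det_updateRow_add, Matrix.det_updateRow_smul, h1, h2, mul_zero, add_zero,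
      ih hks']

private lemma det_aux1 (A : Matrix ι ι ℝ) (u v : ι → ℝ) (s : Finset ι) :
    (Matrix.of fun p q => A p q + if p ∈ s then u p * v q else 0).det
      = A.det + ∑ p ∈ s, u p * (A.updateRow p v).det := by
  induction s using Finset.induction_on with
  | empty => simp; rfl
  | @insert a s' ha ih =>
    have hM : (Matrix.of fun p q => A p q + if p ∈ insert a s' then u p * v q else 0)
        = (Matrix.of fun p q => A p q + if p ∈ s' then u p * v q else 0).updateRow a
            ((fun q => A a q) + u a • v) := by
      ext p q
      by_cases hpa : p = a
      · subst hpa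
        simp [Matrix.updateRow_self, ha]
      · simp [Matrix.updateRow_ne hpa, Finset.mem_insert, hpa]
    have h1 : (Matrix.of fun p q => A p q + if p ∈ s' then u p * v q else 0).updateRow a
        (fun q => A a q)
        = (Matrix.of fun p q => A p q + if p ∈ s' then u p * v q else 0) := by
      ext p q
      by_cases hpa : p = a
      · subst hpa; simp [Matrix.updateRow_self, ha]
      · simp [Matrix.updateRow_ne hpa]
    have h2 : (Matrix.of fun p q => A p q + if p ∈ s' then u p * v q else 0).updateRow a v
        = Matrix.of fun p q => (A.updateRow a v) p q + if p ∈ s' then u p * v q else 0 := by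
      ext p q
      by_cases hpa : p = a
      · subst hpa; simp [Matrix.updateRow_self, ha]
      · simp [Matrix.updateRow_ne hpa]
    rw [hM, Matrix.det_updateRow_add, Matrix.det_updateRow_smul, h1, h2,
      det_aux0 (A.updateRow a v) v a (Matrix.updateRow_self) u s' ha, ih,
      Finset.sum_insert ha]
    ring

private lemma det_add_outer (A : Matrix ι ι ℝ) (u v : ι → ℝ) :
    (Matrix.of fun p q => A p q + u p * v q).det
      = A.det + ∑ p, u p * (A.updateRow p v).det := by
  have := det_aux1 A u v Finset.univ
  simpa using this

private lemma det_updateRow_one_eq_sum_adj (A : Matrix ι ι ℝ) (q : ι) :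
    (A.updateRow q (fun _ => (1:ℝ))).det = ∑ p, A.adjugate p q := by
  have h1 : ∀ b : ι → ℝ, (A.updateRow q b).det = Matrix.cramer Aᵀ b q := fun b => by
    rw [Matrix.cramer_apply, Matrix.updateCol_transpose, Matrix.det_transpose]
  have h2 : (fun _ : ι => (1:ℝ)) = ∑ p : ι, Pi.single p (1:ℝ) :=
    (Finset.univ_sum_single (fun _ : ι => (1:ℝ))).symm
  rw [h1, h2, map_sum, Finset.sum_apply]
  refine Finset.sum_congr rfl fun p _ => ?_
  rw [Matrix.adjugate_apply, h1]

/-- det (A + c) = det A + c * ΣΣ adjugate -/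
private lemma det_add_const (A : Matrix ι ι ℝ) (c : ℝ) :
    (Matrix.of fun p q => A p q + c).det
      = A.det + c * ∑ p, ∑ q, A.adjugate p q := by
  have h := det_add_outer A (fun _ => c) (fun _ => (1:ℝ))
  simp only [mul_one] at h
  rw [h]
  congr 1
  simp_rw [det_updateRow_one_eq_sum_adj, Finset.mul_sum]
  rw [Finset.sum_comm]

end DetLemma

section Generic

variable {m : ℕ} (n : Fin m → ℕ)

/-- block matrix Bl - x I -/
noncomputable def Bmat (x : ℝ) : Matrix ((i : Fin m) × Fin (n i)) ((i : Fin m) × Fin (n i)) ℝ :=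
  Matrix.of fun p q => (if p.1 = q.1 then (1:ℝ) else 0) - x * (if p = q then 1 else 0)

/-- candidate inverse -/
noncomputable def Cmat (x : ℝ) : Matrix ((i : Fin m) × Fin (n i)) ((i : Fin m) × Fin (n i)) ℝ :=
  Matrix.of fun p q =>
    (if p.1 = q.1 then (x * ((n p.1 : ℝ) - x))⁻¹ else 0) - x⁻¹ * (if p = q then 1 else 0)

variable {n}

private lemma sigma_count (c : ℝ) (i₀ : Fin m) :
    (∑ r : (i : Fin m) × Fin (n i), if r.1 = i₀ then c else 0) = (n i₀ : ℝ) * c := by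
  rw [← Finset.univ_sigma_univ, Finset.sum_sigma]
  simp only [Finset.sum_const, Finset.card_univ, Fintype.card_fin]
  rw [Finset.sum_eq_single i₀]
  · simp [nsmul_eq_mul]
  · intro b _ hb; simp [hb]
  · simp

private lemma BC (x : ℝ) (hx : x ≠ 0) (hxn : ∀ i, (n i : ℝ) ≠ x) :
    Bmat n x * Cmat n x = 1 := by
  have hsub : ∀ i, ((n i : ℝ)) - x ≠ 0 := fun i => sub_ne_zero_of_ne (hxn i)
  ext p q
  set g : ℝ := (x * ((n q.1 : ℝ) - x))⁻¹ with hgdef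
  rw [Matrix.mul_apply]
  have expand : ∀ r : (i : Fin m) × Fin (n i),
      Bmat n x p r * Cmat n x r q
        = (if r.1 = p.1 then (if p.1 = q.1 then g else 0) else 0)
          - x * (if p = r then (if r.1 = q.1 then g else 0) else 0)
          - x⁻¹ * (if r = q then (if p.1 = r.1 then (1:ℝ) else 0) else 0)
          + (x * x⁻¹) * (if p = r then (if r = q then (1:ℝ) else 0) else 0) := by
    intro r
    simp only [Bmat, Cmat, Matrix.of_apply, hgdef]
    split_ifs <;> simp_all <;> field_simp <;> ring
  rw [Finset.sum_congr rfl fun r _ => expand r]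
  rw [Finset.sum_add_distrib, Finset.sum_sub_distrib, Finset.sum_sub_distrib,
    ← Finset.mul_sum, ← Finset.mul_sum, ← Finset.mul_sum, sigma_count,
    Finset.sum_ite_eq Finset.univ p, Finset.sum_ite_eq' Finset.univ q,
    Finset.sum_ite_eq Finset.univ p]
  simp only [Finset.mem_univ, if_true]
  by_cases hpq : p.1 = q.1
  · have hn' : (n p.1 : ℝ) = (n q.1 : ℝ) := by rw [hpq]
    have hz : (n q.1 : ℝ) * g - x * g - x⁻¹ = 0 := by
      have h5 : ((n q.1:ℝ) - x) * (x⁻¹ * ((n q.1:ℝ) - x)⁻¹) = x⁻¹ := by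
        rw [mul_comm x⁻¹ (((n q.1:ℝ) - x)⁻¹), ← mul_assoc,
          mul_inv_cancel₀ (hsub q.1), one_mul]
      calc (n q.1 : ℝ) * g - x * g - x⁻¹ = ((n q.1:ℝ) - x) * g - x⁻¹ := by ring
        _ = 0 := by rw [hgdef, mul_inv, h5, sub_self]
    simp only [hpq, if_true, hn', Matrix.one_apply, mul_inv_cancel₀ hx]
    by_cases hpq2 : p = q <;> simp [hpq2] <;> linarith
  · have hpq2 : p ≠ q := fun h => hpq (by rw [h])
    simp [hpq, hpq2, Matrix.one_apply, fun h : q = p => hpq2 h.symm]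

private lemma detB (hn : ∀ i, 1 ≤ n i) (x : ℝ) (hx : x ≠ 0) :
    (Bmat n x).det = (-x) ^ ((∑ i, n i) - m) * ∏ i, ((n i : ℝ) - x) := by
  classical
  set U : Matrix ((i : Fin m) × Fin (n i)) (Fin m) ℝ :=
    Matrix.of fun p i => if p.1 = i then (1:ℝ) else 0 with hU
  set V : Matrix (Fin m) ((i : Fin m) × Fin (n i)) ℝ :=
    Matrix.of fun i q => if q.1 = i then (1:ℝ) else 0 with hV
  have hcard : Fintype.card ((i : Fin m) × Fin (n i)) = ∑ i, n i := by
    simp [Fintype.card_sigma]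
  have hA : Bmat n x = (-x) • (1 : Matrix _ _ ℝ) + U * V := by
    ext p q
    simp only [Bmat, Matrix.of_apply, Matrix.add_apply, Matrix.smul_apply, Matrix.one_apply,
      Matrix.mul_apply, hU, hV]
    have h : ∀ i : Fin m, (if p.1 = i then (1:ℝ) else 0) * (if q.1 = i then (1:ℝ) else 0)
        = if p.1 = i then (if p.1 = q.1 then (1:ℝ) else 0) else 0 := by
      intro i; split_ifs <;> simp_all
    rw [Finset.sum_congr rfl fun i _ => h i, Finset.sum_ite_eq Finset.univ p.1
      (fun _ => if p.1 = q.1 then (1:ℝ) else 0)]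
    simp only [Finset.mem_univ, if_true, smul_eq_mul, mul_ite, mul_one, mul_zero]
    split_ifs <;> ring
  have hdet1 : ((-x) • (1 : Matrix ((i : Fin m) × Fin (n i)) _ ℝ)).det
      = (-x) ^ (∑ i, n i) := by
    rw [Matrix.det_smul, Matrix.det_one, mul_one, hcard]
  have hxne : (-x) ≠ 0 := neg_ne_zero.mpr hx
  have hunit : IsUnit ((-x) • (1 : Matrix ((i : Fin m) × Fin (n i)) _ ℝ)).det := by
    rw [hdet1]; exact isUnit_iff_ne_zero.mpr (pow_ne_zero _ hxne)
  have hinv : ((-x) • (1 : Matrix ((i : Fin m) × Fin (n i)) ((i : Fin m) × Fin (n i)) ℝ))⁻¹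
      = (-x)⁻¹ • (1 : Matrix ((i : Fin m) × Fin (n i)) ((i : Fin m) × Fin (n i)) ℝ) := by
    apply Matrix.inv_eq_right_inv
    rw [Matrix.smul_mul, Matrix.mul_smul, Matrix.one_mul, smul_smul,
      mul_inv_cancel₀ hxne, one_smul]
  have hVU : V * U = Matrix.diagonal (fun i => (n i : ℝ)) := by
    ext i j
    rw [Matrix.mul_apply]
    have h : ∀ p : (i : Fin m) × Fin (n i),
        V i p * U p j = if p.1 = i then (if i = j then (1:ℝ) else 0) else 0 := by
      intro p; simp only [hU, hV, Matrix.of_apply]; split_ifs <;> simp_all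
    rw [Finset.sum_congr rfl fun p _ => h p, sigma_count]
    by_cases hij : i = j <;> simp [hij]
  rw [hA, Matrix.det_add_mul U V hunit, hdet1, hinv]
  have h2 : V * ((-x)⁻¹ • (1 : Matrix ((i : Fin m) × Fin (n i)) ((i : Fin m) × Fin (n i)) ℝ)) * U
      = (-x)⁻¹ • (V * U) := by
    rw [Matrix.mul_smul, Matrix.mul_one, Matrix.smul_mul]
  rw [h2, hVU]
  have h3 : (1 : Matrix (Fin m) (Fin m) ℝ) + (-x)⁻¹ • Matrix.diagonal (fun i => (n i:ℝ))
      = Matrix.diagonal (fun i => 1 + (-x)⁻¹ * (n i:ℝ)) := by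
    ext i j
    by_cases hij : i = j
    · subst hij; simp
    · simp [Matrix.one_apply_ne hij, Matrix.diagonal_apply_ne _ hij]
  rw [h3, Matrix.det_diagonal]
  have hm_le : m ≤ ∑ i, n i := by
    calc m = ∑ _i : Fin m, 1 := by simp
      _ ≤ ∑ i, n i := Finset.sum_le_sum fun i _ => hn i
  conv_lhs => rw [← Nat.sub_add_cancel hm_le]
  rw [pow_add, mul_assoc]
  congr 1
  have h4 : ((-x))^m = ∏ _i : Fin m, (-x) := by
    rw [Finset.prod_const, Finset.card_univ, Fintype.card_fin]
  rw [h4, ← Finset.prod_mul_distrib]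
  refine Finset.prod_congr rfl fun i _ => ?_
  field_simp
  ring

private lemma SS_generic (hn : ∀ i, 1 ≤ n i) (x : ℝ) (hx : x ≠ 0)
    (hxn : ∀ i, (n i : ℝ) ≠ x) :
    (∑ p, ∑ q, (Bmat n x).adjugate p q)
      = (-x) ^ ((∑ i, n i) - m) *
        ∑ i, (n i : ℝ) * ∏ j ∈ Finset.univ.erase i, ((n j : ℝ) - x) := by
  have hsub : ∀ i, ((n i : ℝ)) - x ≠ 0 := fun i => sub_ne_zero_of_ne (hxn i)
  have hadj : (Bmat n x).adjugate = (Bmat n x).det • Cmat n x := by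
    calc (Bmat n x).adjugate = (Bmat n x).adjugate * (Bmat n x * Cmat n x) := by
          rw [BC x hx hxn, Matrix.mul_one]
      _ = ((Bmat n x).adjugate * Bmat n x) * Cmat n x := by rw [Matrix.mul_assoc]
      _ = ((Bmat n x).det • (1 : Matrix _ _ ℝ)) * Cmat n x := by rw [Matrix.adjugate_mul]
      _ = (Bmat n x).det • Cmat n x := by rw [Matrix.smul_mul, Matrix.one_mul]
  rw [hadj]
  simp only [Matrix.smul_apply, smul_eq_mul, ← Finset.mul_sum]
  have hC : ∀ p : (i : Fin m) × Fin (n i), (∑ q, Cmat n x p q) = ((n p.1 : ℝ) - x)⁻¹ := by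
    intro p
    simp only [Cmat, Matrix.of_apply]
    rw [Finset.sum_sub_distrib, ← Finset.mul_sum]
    have h1 : ∀ q : (i : Fin m) × Fin (n i),
        (if p.1 = q.1 then (x * ((n p.1 : ℝ) - x))⁻¹ else 0)
          = (if q.1 = p.1 then (x * ((n p.1 : ℝ) - x))⁻¹ else 0) :=
      fun q => if_congr eq_comm rfl rfl
    rw [Finset.sum_congr rfl fun q _ => h1 q, sigma_count,
      Finset.sum_ite_eq Finset.univ p (fun _ => (1:ℝ))]
    simp only [Finset.mem_univ, if_true, mul_one]
    rw [mul_inv]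
    have ha : ((n p.1:ℝ) - x) * ((n p.1:ℝ) - x)⁻¹ = 1 := mul_inv_cancel₀ (hsub p.1)
    have hb : x⁻¹ * x = 1 := inv_mul_cancel₀ hx
    linear_combination x⁻¹ * ha + ((n p.1:ℝ) - x)⁻¹ * hb
  rw [Finset.sum_congr rfl fun p _ => hC p]
  have hsum : (∑ p : (i : Fin m) × Fin (n i), ((n p.1:ℝ) - x)⁻¹)
      = ∑ i, (n i : ℝ) * ((n i :ℝ) - x)⁻¹ := by
    rw [← Finset.univ_sigma_univ, Finset.sum_sigma]
    refine Finset.sum_congr rfl fun i _ => ?_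
    show (∑ _s : Fin (n i), ((n i:ℝ) - x)⁻¹) = _
    rw [Finset.sum_const, Finset.card_univ, Fintype.card_fin, nsmul_eq_mul]
  rw [hsum, detB hn x hx, mul_assoc]
  congr 1
  rw [Finset.mul_sum]
  refine Finset.sum_congr rfl fun i _ => ?_
  calc (∏ j, ((n j:ℝ) - x)) * ((n i:ℝ) * ((n i:ℝ) - x)⁻¹)
      = (((n i:ℝ) - x) * ((n i:ℝ) - x)⁻¹) *
          ((n i:ℝ) * ∏ j ∈ Finset.univ.erase i, ((n j:ℝ) - x)) := by
        rw [← Finset.mul_prod_erase _ _ (Finset.mem_univ i)]; ring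
    _ = (n i:ℝ) * ∏ j ∈ Finset.univ.erase i, ((n j:ℝ) - x) := by
        rw [mul_inv_cancel₀ (hsub i), one_mul]

private lemma SS_two (hn : ∀ i, 1 ≤ n i) :
    (∑ p, ∑ q, (Bmat n (2:ℝ)).adjugate p q)
      = (-2:ℝ) ^ ((∑ i, n i) - m) *
        ∑ i, (n i : ℝ) * ∏ j ∈ Finset.univ.erase i, ((n j : ℝ) - 2) := by
  classical
  set Bp : Matrix ((i : Fin m) × Fin (n i)) ((i : Fin m) × Fin (n i)) ℝ[X] :=
    Matrix.of fun p q =>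
      (if p.1 = q.1 then (1:ℝ[X]) else 0) - (X : ℝ[X]) * (if p = q then 1 else 0) with hBp
  set P : ℝ[X] := ∑ p, ∑ q, Bp.adjugate p q with hP
  set Q : ℝ[X] := (-X : ℝ[X]) ^ ((∑ i, n i) - m) *
      ∑ i, (Polynomial.C (n i : ℝ)) *
        ∏ j ∈ Finset.univ.erase i, (Polynomial.C (n j : ℝ) - X) with hQ
  have hmap : ∀ x : ℝ, (Polynomial.evalRingHom x).mapMatrix Bp = Bmat n x := by
    intro x
    ext p q
    simp only [RingHom.mapMatrix_apply, Matrix.map_apply, hBp, Bmat, Matrix.of_apply]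
    simp [apply_ite (Polynomial.eval x)]
  have hevalP : ∀ x : ℝ, Polynomial.eval x P = ∑ p, ∑ q, (Bmat n x).adjugate p q := by
    intro x
    rw [hP]
    rw [Polynomial.eval_finset_sum]
    refine Finset.sum_congr rfl fun p _ => ?_
    rw [Polynomial.eval_finset_sum]
    refine Finset.sum_congr rfl fun q _ => ?_
    calc Polynomial.eval x (Bp.adjugate p q)
        = ((Polynomial.evalRingHom x).mapMatrix Bp.adjugate) p q := rfl
      _ = (Matrix.adjugate ((Polynomial.evalRingHom x).mapMatrix Bp)) p q := by
          rw [RingHom.map_adjugate]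
      _ = (Bmat n x).adjugate p q := by rw [hmap x]
  have hevalQ : ∀ x : ℝ, Polynomial.eval x Q
      = (-x)^((∑ i, n i) - m) *
        ∑ i, (n i:ℝ) * ∏ j ∈ Finset.univ.erase i, ((n j:ℝ) - x) := by
    intro x
    simp [hQ, Polynomial.eval_finset_sum, Polynomial.eval_prod]
  have hPQ : P = Q := by
    apply Polynomial.eq_of_infinite_eval_eq
    have hfin : (({0} ∪ Set.range (fun i => (n i : ℝ))) : Set ℝ).Finite :=
      (Set.finite_singleton 0).union (Set.finite_range _)
    have hsub2 : (({0} ∪ Set.range (fun i => (n i : ℝ))) : Set ℝ)ᶜ ⊆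
        {x | Polynomial.eval x P = Polynomial.eval x Q} := by
      intro x hxmem
      simp only [Set.mem_compl_iff, Set.mem_union, Set.mem_singleton_iff, Set.mem_range,
        not_or, not_exists] at hxmem
      obtain ⟨hx0, hxn⟩ := hxmem
      have hxn' : ∀ i, (n i : ℝ) ≠ x := fun i => hxn i
      show Polynomial.eval x P = Polynomial.eval x Q
      rw [hevalP, hevalQ, SS_generic hn x hx0 hxn']
    exact hfin.infinite_compl.mono hsub2
  have h2 := hevalP 2
  rw [hPQ, hevalQ] at h2
  exact h2.symm

end Generic

theorem stmt1 (m : ℕ) (hm : 2 ≤ m) (n : Fin m → ℕ) (hn : ∀ i, 1 ≤ n i)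
    (D : Matrix ((i : Fin m) × Fin (n i)) ((i : Fin m) × Fin (n i)) ℝ)
    (hD : ∀ u v, D u v = if u = v then 0 else if u.1 = v.1 then 2 else 1) :
    ∑ u, ∑ v, D.adjugate u v =
      (-2 : ℝ) ^ ((∑ i, n i) - m) *
        ∑ i : Fin m, (n i : ℝ) * ∏ j ∈ Finset.univ.erase i, ((n j : ℝ) - 2) := by
  classical
  set B := Bmat n (2:ℝ) with hB
  have hDB : D = Matrix.of fun p q => B p q + 1 := by
    ext p q
    rw [hD]
    simp only [hB, Bmat, Matrix.of_apply]
    by_cases h1 : p = q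
    · subst h1; simp; norm_num
    · by_cases h2 : p.1 = q.1 <;> simp [h1, h2] <;> ring
  have e1 : (Matrix.of fun p q => D p q + 1).det
      = D.det + 1 * ∑ p, ∑ q, D.adjugate p q := det_add_const D 1
  have e2 : D.det = B.det + 1 * ∑ p, ∑ q, B.adjugate p q := by
    nth_rewrite 1 [hDB]
    exact det_add_const B 1
  have e3 : (Matrix.of fun p q => B p q + 2).det
      = B.det + 2 * ∑ p, ∑ q, B.adjugate p q := det_add_const B 2
  have e4 : (Matrix.of fun p q => D p q + 1) = (Matrix.of fun p q => B p q + 2) := by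
    ext p q
    rw [hDB]
    simp only [Matrix.of_apply]
    ring
  have hSS : ∑ p, ∑ q, D.adjugate p q = ∑ p, ∑ q, B.adjugate p q := by
    rw [e4, e3, e2] at e1
    linarith
  rw [hSS, hB, SS_two hn]
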